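/- There is an absolute constant C such that for every real ν ≥ 0 and every r > 0 with r ≥ 2ν, there exist complex numbers a = a(ν,r) and E = E(ν,r) with |a| ≤ C and |E| ≤ C r^{-1} such that ∫_0^π e^{i(r sin θ - ν θ)} dθ = a · r^{-1/2} e^{-i r} + E. -/

import Mathlib

open MeasureTheory Real

noncomputable def oscF (ν r : ℝ) (θ : ℝ) : ℂ :=
  Complex.exp (Complex.I * ((r * Real.sin θ - ν * θ : ℝ) : ℂ))

lemma oscF_cont (ν r : ℝ) : Continuous (oscF ν r) := by
  unfold oscF; fun_prop

lemma oscF_norm (ν r θ : ℝ) : ‖oscF ν r θ‖ = 1 := by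
  unfold oscF
  rw [mul_comm, Complex.norm_exp_ofReal_mul_I]

lemma osc_piece (ν r a b m : ℝ) (hr : 0 ≤ r) (hab : a ≤ b) (ha : 0 ≤ a) (hb : b ≤ π) (hm : 0 < m)
    (hp : (∀ θ ∈ Set.Icc a b, m ≤ r * Real.cos θ - ν) ∨
          (∀ θ ∈ Set.Icc a b, r * Real.cos θ - ν ≤ -m)) :
    ‖∫ θ in a..b, oscF ν r θ‖ ≤ 3 / m := by
  set p : ℝ → ℝ := fun θ => r * Real.cos θ - ν with hpdef
  have hpne : ∀ θ ∈ Set.Icc a b, p θ ≠ 0 := by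
    intro θ hθ h0
    simp only [hpdef] at h0
    rcases hp with h | h
    · linarith [h θ hθ]
    · linarith [h θ hθ]
  have hpabs : ∀ θ ∈ Set.Icc a b, m ≤ |p θ| := by
    intro θ hθ
    rcases hp with h | h
    · have := h θ hθ; rw [abs_of_pos (by simp only [hpdef]; linarith)]
      simpa [hpdef] using this
    · have := h θ hθ; rw [abs_of_neg (by simp only [hpdef]; linarith)]
      simp only [hpdef]; linarith
  -- derivative facts
  have hφd : ∀ θ : ℝ, HasDerivAt (fun θ : ℝ => r * Real.sin θ - ν * θ) (p θ) θ := by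
    intro θ
    have h1 := (Real.hasDerivAt_sin θ).const_mul r
    have h2 : HasDerivAt (fun θ : ℝ => ν * θ) ν θ := by
      simpa using (hasDerivAt_id θ).const_mul ν
    exact h1.sub h2
  have hpd : ∀ θ : ℝ, HasDerivAt p (-(r * Real.sin θ)) θ := by
    intro θ
    have h1 := (Real.hasDerivAt_cos θ).const_mul r
    simpa [hpdef, mul_comm] using h1.sub_const ν
  -- F and its derivative
  set F : ℝ → ℂ := fun θ => oscF ν r θ / (Complex.I * (p θ : ℂ)) with hFdef
  set G : ℝ → ℂ := fun θ =>
    Complex.I * ((r * Real.sin θ : ℝ) : ℂ) * oscF ν r θ / ((p θ : ℝ) : ℂ) ^ 2 with hGdef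
  have hFd : ∀ θ ∈ Set.Icc a b, HasDerivAt F (oscF ν r θ - G θ) θ := by
    intro θ hθ
    have hnum : HasDerivAt (fun θ => oscF ν r θ)
        (Complex.I * (p θ : ℂ) * oscF ν r θ) θ := by
      have h1 : HasDerivAt (fun θ : ℝ => ((r * Real.sin θ - ν * θ : ℝ) : ℂ))
          ((p θ : ℝ) : ℂ) θ := (hφd θ).ofReal_comp
      have h2 := (h1.const_mul Complex.I).cexp
      simpa [oscF, mul_comm] using h2
    have hden : HasDerivAt (fun θ => Complex.I * ((p θ : ℝ) : ℂ))
        (Complex.I * ((-(r * Real.sin θ) : ℝ) : ℂ)) θ :=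
      ((hpd θ).ofReal_comp).const_mul Complex.I
    have hdne : Complex.I * ((p θ : ℝ) : ℂ) ≠ 0 := by
      simp [Complex.I_ne_zero, Complex.ofReal_eq_zero, hpne θ hθ]
    have := hnum.div hden hdne
    refine this.congr_deriv (Eq.symm ?_)
    have hpc : ((p θ : ℝ) : ℂ) ≠ 0 := by
      simpa [Complex.ofReal_eq_zero] using hpne θ hθ
    simp only [hGdef]
    field_simp
    have h3 : Complex.I ^ 3 = -Complex.I := by
      simp [pow_succ, Complex.I_sq]
    ring_nf
    rw [Complex.I_sq]
    push_cast
    ring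
  have hIcc : Set.uIcc a b = Set.Icc a b := Set.uIcc_of_le hab
  have hGcont : ContinuousOn G (Set.Icc a b) := by
    simp only [hGdef]
    apply ContinuousOn.div
    · exact Continuous.continuousOn (by unfold oscF; fun_prop)
    · exact Continuous.continuousOn (by fun_prop)
    · intro θ hθ
      simp only [ne_eq, pow_eq_zero_iff, Complex.ofReal_eq_zero]
      simpa using hpne θ hθ
  have hfint : IntervalIntegrable (oscF ν r) volume a b :=
    (oscF_cont ν r).intervalIntegrable a b
  have hGint : IntervalIntegrable G volume a b :=
    (hIcc ▸ hGcont).intervalIntegrable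
  have hFTC : ∫ θ in a..b, (oscF ν r θ - G θ) = F b - F a :=
    intervalIntegral.integral_eq_sub_of_hasDerivAt
      (fun θ hθ => hFd θ (hIcc ▸ hθ)) (hfint.sub hGint)
  have hsplit : (∫ θ in a..b, oscF ν r θ) = (F b - F a) + ∫ θ in a..b, G θ := by
    rw [intervalIntegral.integral_sub hfint hGint] at hFTC
    linear_combination hFTC
  -- bound on ∫ G
  have hgR : ∀ θ ∈ Set.Icc a b, HasDerivAt (fun θ => (p θ)⁻¹) (r * Real.sin θ / (p θ) ^ 2) θ := by
    intro θ hθ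
    have := (hpd θ).inv (hpne θ hθ)
    simp only [neg_neg] at this
    exact this
  have hgRcont : ContinuousOn (fun θ => r * Real.sin θ / (p θ) ^ 2) (Set.Icc a b) := by
    simp only [hpdef]
    apply ContinuousOn.div
    · exact Continuous.continuousOn (by fun_prop)
    · exact Continuous.continuousOn (by fun_prop)
    · intro θ hθ
      simpa [pow_eq_zero_iff] using hpne θ hθ
  have hgRint : IntervalIntegrable (fun θ => r * Real.sin θ / (p θ) ^ 2) volume a b :=
    (hIcc ▸ hgRcont).intervalIntegrable
  have hgFTC : (∫ θ in a..b, r * Real.sin θ / (p θ) ^ 2) = (p b)⁻¹ - (p a)⁻¹ :=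
    intervalIntegral.integral_eq_sub_of_hasDerivAt
      (fun θ hθ => hgR θ (hIcc ▸ hθ)) hgRint
  have hGle : ‖∫ θ in a..b, G θ‖ ≤ |(p b)⁻¹ - (p a)⁻¹| := by
    rw [← hgFTC]
    apply intervalIntegral.norm_integral_le_abs_of_norm_le _ hgRint
    filter_upwards [ae_restrict_mem measurableSet_uIoc] with θ hθ
    have hθ' : θ ∈ Set.Icc a b := by
      rw [Set.uIoc_of_le hab] at hθ
      exact ⟨hθ.1.le, hθ.2⟩
    have hsin : 0 ≤ Real.sin θ :=
      Real.sin_nonneg_of_nonneg_of_le_pi (le_trans ha hθ'.1) (le_trans hθ'.2 hb)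
    have : ‖G θ‖ = r * Real.sin θ / (p θ) ^ 2 := by
      have hone : ‖oscF ν r θ‖ = 1 := oscF_norm ν r θ
      simp only [hGdef, norm_div, norm_mul, norm_pow, hone, Complex.norm_I,
        Complex.norm_real, Real.norm_eq_abs, sq_abs, one_mul, mul_one]
      rw [abs_of_nonneg hr, abs_of_nonneg hsin]
    exact le_of_eq this
  have habs : |(p b)⁻¹ - (p a)⁻¹| ≤ m⁻¹ := by
    have hmem_a : a ∈ Set.Icc a b := ⟨le_refl a, hab⟩
    have hmem_b : b ∈ Set.Icc a b := ⟨hab, le_refl b⟩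
    rcases hp with h | h
    · have hpa := h a hmem_a; have hpb := h b hmem_b
      simp only [hpdef]
      have h1 : (r * Real.cos b - ν)⁻¹ ≤ m⁻¹ := inv_anti₀ hm hpb
      have h2 : (r * Real.cos a - ν)⁻¹ ≤ m⁻¹ := inv_anti₀ hm hpa
      have h3 : 0 < (r * Real.cos b - ν)⁻¹ := inv_pos.mpr (lt_of_lt_of_le hm hpb)
      have h4 : 0 < (r * Real.cos a - ν)⁻¹ := inv_pos.mpr (lt_of_lt_of_le hm hpa)
      rw [abs_le]
      constructor <;> linarith
    · have hpa := h a hmem_a; have hpb := h b hmem_b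
      simp only [hpdef]
      have hb0 : (0:ℝ) < -(r * Real.cos b - ν) := by linarith
      have ha0 : (0:ℝ) < -(r * Real.cos a - ν) := by linarith
      have h1 : (-(r * Real.cos b - ν))⁻¹ ≤ m⁻¹ := inv_anti₀ hm (by linarith)
      have h2 : (-(r * Real.cos a - ν))⁻¹ ≤ m⁻¹ := inv_anti₀ hm (by linarith)
      have h3 := inv_pos.mpr hb0
      have h4 := inv_pos.mpr ha0
      rw [inv_neg] at h1 h2 h3 h4
      rw [abs_le]
      constructor <;> linarith
  -- F norms
  have hFnorm : ∀ θ ∈ Set.Icc a b, ‖F θ‖ ≤ m⁻¹ := by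
    intro θ hθ
    have hone : ‖oscF ν r θ‖ = 1 := oscF_norm ν r θ
    simp only [hFdef, norm_div, norm_mul, hone, Complex.norm_I,
      Complex.norm_real, Real.norm_eq_abs, one_mul]
    rw [one_div]
    exact inv_anti₀ hm (hpabs θ hθ)
  calc ‖∫ θ in a..b, oscF ν r θ‖ ≤ ‖F b - F a‖ + ‖∫ θ in a..b, G θ‖ := by
        rw [hsplit]; exact norm_add_le _ _
    _ ≤ (‖F b‖ + ‖F a‖) + |(p b)⁻¹ - (p a)⁻¹| := by
        gcongr
        exact norm_sub_le _ _
    _ ≤ (m⁻¹ + m⁻¹) + m⁻¹ := by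
        gcongr
        · exact hFnorm b ⟨hab, le_refl b⟩
        · exact hFnorm a ⟨le_refl a, hab⟩
    _ = 3 / m := by rw [div_eq_mul_inv]; ring

lemma sin_ge_half (x : ℝ) (h1 : π/6 ≤ x) (h2 : x ≤ 5*π/6) : 1/2 ≤ Real.sin x := by
  rcases le_or_gt x (π/2) with h | h
  · rw [← Real.sin_pi_div_six]
    exact Real.sin_le_sin_of_le_of_le_pi_div_two (by linarith [Real.pi_pos]) h h1
  · rw [← Real.sin_pi_sub, ← Real.sin_pi_div_six]
    exact Real.sin_le_sin_of_le_of_le_pi_div_two (by linarith [Real.pi_pos])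
      (by linarith) (by linarith)

lemma sin_ge_half_x (x : ℝ) (h1 : 0 ≤ x) (h2 : x ≤ π/2) : x/2 ≤ Real.sin x := by
  have h := Real.mul_le_sin h1 h2
  have hπ : π ≤ 4 := Real.pi_le_four
  have hπ0 := Real.pi_pos
  have : x / 2 ≤ 2 / π * x := by
    rw [div_mul_eq_mul_div, div_le_div_iff₀ (by norm_num) hπ0]
    nlinarith
  linarith

lemma osc_main (ν r : ℝ) (hν : 0 ≤ ν) (hr : 1 ≤ r) (h2 : 2 * ν ≤ r) :
    ‖∫ θ in (0:ℝ)..π, oscF ν r θ‖ ≤ 26 / Real.sqrt r := by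
  have hr0 : 0 < r := lt_of_lt_of_le one_pos hr
  set s := Real.sqrt r with hs
  have hs1 : 1 ≤ s := by
    rw [hs, show (1:ℝ) = Real.sqrt 1 from Real.sqrt_one.symm]
    exact Real.sqrt_le_sqrt hr
  have hs0 : 0 < s := lt_of_lt_of_le one_pos hs1
  have hss : s * s = r := Real.mul_self_sqrt hr0.le
  set δ := s⁻¹ with hδ
  have hδ0 : 0 < δ := inv_pos.mpr hs0
  have hδ1 : δ ≤ 1 := by
    rw [hδ]
    exact inv_le_one_of_one_le₀ hs1
  have hrδ : r * δ = s := by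
    rw [hδ, ← hss]; field_simp
  set c := ν / r with hc
  have hc0 : 0 ≤ c := div_nonneg hν hr0.le
  have hc2 : c ≤ 1/2 := by rw [hc, div_le_iff₀ hr0]; linarith
  set θ0 := Real.arccos c with hθ0
  have hcosθ0 : Real.cos θ0 = c := Real.cos_arccos (by linarith) (by linarith)
  have hθ0le : θ0 ≤ π/2 := Real.arccos_le_pi_div_two.mpr hc0
  have hπ3 : (3:ℝ) < π := Real.pi_gt_three
  have hθ0ge : π/3 ≤ θ0 := by
    by_contra h
    push_neg at h
    have := Real.strictAntiOn_cos ⟨Real.arccos_nonneg c, Real.arccos_le_pi c⟩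
      ⟨by positivity, by linarith⟩ h
    rw [Real.cos_pi_div_three, hcosθ0] at this
    linarith
  have hνr : ν = r * Real.cos θ0 := by
    rw [hcosθ0, hc]; field_simp
  have ha1 : 0 < θ0 - δ := by linarith
  have hb1 : θ0 + δ < π := by linarith
  -- key sine lower bounds
  have hsinδ : δ/4 ≤ Real.sin (δ/2) := by
    have := sin_ge_half_x (δ/2) (by linarith) (by linarith)
    linarith
  have hsinL : 1/2 ≤ Real.sin (θ0 - δ/2) :=
    sin_ge_half _ (by linarith) (by linarith)
  have hsinR : 1/2 ≤ Real.sin (θ0 + δ/2) :=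
    sin_ge_half _ (by linarith) (by linarith)
  -- left piece
  have hcosL : Real.cos (θ0 - δ) - Real.cos θ0 = 2 * Real.sin (θ0 - δ/2) * Real.sin (δ/2) := by
    rw [Real.cos_sub_cos, show (θ0 - δ + θ0)/2 = θ0 - δ/2 by ring,
      show (θ0 - δ - θ0)/2 = -(δ/2) by ring, Real.sin_neg]
    ring
  have hmL : s/4 ≤ r * (Real.cos (θ0 - δ) - Real.cos θ0) := by
    rw [hcosL]
    have h1 : 2 * (1/2) * (δ/4) ≤ 2 * Real.sin (θ0 - δ/2) * Real.sin (δ/2) := by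
      apply mul_le_mul
      · linarith
      · exact hsinδ
      · linarith
      · positivity
    calc s/4 = r * (2 * (1/2) * (δ/4)) := by
              rw [show r * (2*(1/2)*(δ/4)) = (r*δ)/4 by ring, hrδ]
      _ ≤ r * (2 * Real.sin (θ0 - δ/2) * Real.sin (δ/2)) := by
          apply mul_le_mul_of_nonneg_left h1 hr0.le
  have hleft : ‖∫ θ in (0:ℝ)..(θ0 - δ), oscF ν r θ‖ ≤ 12 / s := by
    have hb := osc_piece ν r 0 (θ0 - δ) (s/4) hr0.le ha1.le (le_refl 0)
      (by linarith) (by positivity)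
      (Or.inl (by
        intro θ hθ
        have hcos : Real.cos (θ0 - δ) ≤ Real.cos θ :=
          Real.cos_le_cos_of_nonneg_of_le_pi hθ.1 (by linarith) hθ.2
        have : r * (Real.cos (θ0 - δ) - Real.cos θ0) ≤ r * Real.cos θ - ν := by
          rw [hνr]; nlinarith
        linarith))
    calc ‖∫ θ in (0:ℝ)..(θ0 - δ), oscF ν r θ‖ ≤ 3 / (s/4) := hb
      _ = 12 / s := by field_simp; ring
  -- right piece
  have hcosR : Real.cos θ0 - Real.cos (θ0 + δ) = 2 * Real.sin (θ0 + δ/2) * Real.sin (δ/2) := by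
    rw [Real.cos_sub_cos, show (θ0 + (θ0 + δ))/2 = θ0 + δ/2 by ring,
      show (θ0 - (θ0 + δ))/2 = -(δ/2) by ring, Real.sin_neg]
    ring
  have hmR : s/4 ≤ r * (Real.cos θ0 - Real.cos (θ0 + δ)) := by
    rw [hcosR]
    have h1 : 2 * (1/2) * (δ/4) ≤ 2 * Real.sin (θ0 + δ/2) * Real.sin (δ/2) := by
      apply mul_le_mul
      · linarith
      · exact hsinδ
      · linarith
      · positivity
    calc s/4 = r * (2 * (1/2) * (δ/4)) := by
              rw [show r * (2*(1/2)*(δ/4)) = (r*δ)/4 by ring, hrδ]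
      _ ≤ r * (2 * Real.sin (θ0 + δ/2) * Real.sin (δ/2)) := by
          apply mul_le_mul_of_nonneg_left h1 hr0.le
  have hright : ‖∫ θ in (θ0 + δ)..π, oscF ν r θ‖ ≤ 12 / s := by
    have hb := osc_piece ν r (θ0 + δ) π (s/4) hr0.le hb1.le (by linarith)
      (le_refl π) (by positivity)
      (Or.inr (by
        intro θ hθ
        have hcos : Real.cos θ ≤ Real.cos (θ0 + δ) :=
          Real.cos_le_cos_of_nonneg_of_le_pi (by linarith) hθ.2 hθ.1
        have : r * Real.cos θ - ν ≤ -(r * (Real.cos θ0 - Real.cos (θ0 + δ))) := by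
          rw [hνr]; nlinarith
        linarith))
    calc ‖∫ θ in (θ0 + δ)..π, oscF ν r θ‖ ≤ 3 / (s/4) := hb
      _ = 12 / s := by field_simp; ring
  -- middle piece
  have hmid : ‖∫ θ in (θ0 - δ)..(θ0 + δ), oscF ν r θ‖ ≤ 2 / s := by
    have := intervalIntegral.norm_integral_le_of_norm_le_const
      (C := 1) (a := θ0 - δ) (b := θ0 + δ) (f := oscF ν r)
      (fun x _ => le_of_eq (oscF_norm ν r x))
    have habs : |(θ0 + δ) - (θ0 - δ)| = 2 * δ := by
      rw [abs_of_nonneg (by linarith)]; ring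
    rw [habs] at this
    calc ‖∫ θ in (θ0 - δ)..(θ0 + δ), oscF ν r θ‖ ≤ 1 * (2 * δ) := this
      _ = 2 / s := by rw [hδ]; field_simp
  -- combine
  have hint : ∀ u v : ℝ, IntervalIntegrable (oscF ν r) volume u v :=
    fun u v => (oscF_cont ν r).intervalIntegrable u v
  have hsplit1 : (∫ θ in (0:ℝ)..(θ0 + δ), oscF ν r θ)
      = (∫ θ in (0:ℝ)..(θ0 - δ), oscF ν r θ) + ∫ θ in (θ0 - δ)..(θ0 + δ), oscF ν r θ :=
    (intervalIntegral.integral_add_adjacent_intervals (hint _ _) (hint _ _)).symm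
  have hsplit2 : (∫ θ in (0:ℝ)..π, oscF ν r θ)
      = (∫ θ in (0:ℝ)..(θ0 + δ), oscF ν r θ) + ∫ θ in (θ0 + δ)..π, oscF ν r θ :=
    (intervalIntegral.integral_add_adjacent_intervals (hint _ _) (hint _ _)).symm
  rw [hsplit2, hsplit1]
  calc ‖((∫ θ in (0:ℝ)..(θ0 - δ), oscF ν r θ) + ∫ θ in (θ0 - δ)..(θ0 + δ), oscF ν r θ)
        + ∫ θ in (θ0 + δ)..π, oscF ν r θ‖
      ≤ (‖∫ θ in (0:ℝ)..(θ0 - δ), oscF ν r θ‖ + ‖∫ θ in (θ0 - δ)..(θ0 + δ), oscF ν r θ‖)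
        + ‖∫ θ in (θ0 + δ)..π, oscF ν r θ‖ := by
        exact le_trans (norm_add_le _ _) (by gcongr; exact norm_add_le _ _)
    _ ≤ (12 / s + 2 / s) + 12 / s := by gcongr
    _ = 26 / s := by ring

/-- Stationary phase asymptotics for the oscillatory integral `∫_0^π e^{i(r sin θ - νθ)} dθ`
in the regime `r ≥ 2ν` (estimate (2.16)). -/
theorem oscillatory_integral_asymptotics :
    ∃ C : ℝ, 0 < C ∧ ∀ ν r : ℝ, 0 ≤ ν → 0 < r → 2 * ν ≤ r →
      ∃ a E : ℂ, ‖a‖ ≤ C ∧ ‖E‖ ≤ C * r⁻¹ ∧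
        (∫ θ in (0 : ℝ)..π,
            Complex.exp (Complex.I * ((r * Real.sin θ - ν * θ : ℝ) : ℂ)))
          = a * ((r ^ (-(1 : ℝ) / 2) : ℝ) : ℂ) * Complex.exp (-(Complex.I * (r : ℂ))) + E := by
  refine ⟨26, by norm_num, fun ν r hν hr0 h2 => ?_⟩
  have hint : (∫ θ in (0 : ℝ)..π,
      Complex.exp (Complex.I * ((r * Real.sin θ - ν * θ : ℝ) : ℂ)))
      = ∫ θ in (0:ℝ)..π, oscF ν r θ := rfl
  rcases le_or_gt 1 r with hr1 | hr1
  · -- main case : r ≥ 1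
    set I0 : ℂ := ∫ θ in (0:ℝ)..π, oscF ν r θ with hI0
    have hs0 : (0:ℝ) < Real.sqrt r := Real.sqrt_pos.mpr hr0
    have hbound := osc_main ν r hν hr1 h2
    refine ⟨I0 * (Real.sqrt r : ℂ) * Complex.exp (Complex.I * (r:ℂ)), 0, ?_, ?_, ?_⟩
    · rw [norm_mul, norm_mul]
      have h1 : ‖(Real.sqrt r : ℂ)‖ = Real.sqrt r := by
        rw [Complex.norm_real, Real.norm_eq_abs, abs_of_nonneg hs0.le]
      have h2' : ‖Complex.exp (Complex.I * (r:ℂ))‖ = 1 := by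
        rw [mul_comm, Complex.norm_exp_ofReal_mul_I]
      rw [h1, h2', mul_one]
      calc ‖I0‖ * Real.sqrt r ≤ (26 / Real.sqrt r) * Real.sqrt r := by
            apply mul_le_mul_of_nonneg_right hbound hs0.le
        _ = 26 := by field_simp
    · simp only [norm_zero]
      positivity
    · rw [hint]
      have hrpow : (r ^ (-(1 : ℝ) / 2) : ℝ) = (Real.sqrt r)⁻¹ := by
        rw [show (-(1:ℝ)/2) = -(1/2) by ring, Real.rpow_neg hr0.le, Real.sqrt_eq_rpow]
      rw [hrpow, add_zero]
      have hexp : Complex.exp (Complex.I * (r:ℂ)) * Complex.exp (-(Complex.I * (r:ℂ))) = 1 := by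
        rw [← Complex.exp_add, add_neg_cancel, Complex.exp_zero]
      have hsqrt : ((Real.sqrt r : ℂ)) * (((Real.sqrt r)⁻¹ : ℝ) : ℂ) = 1 := by
        push_cast
        rw [mul_inv_cancel₀]
        exact_mod_cast hs0.ne'
      calc I0 = I0 * (((Real.sqrt r : ℂ)) * (((Real.sqrt r)⁻¹ : ℝ) : ℂ))
            * (Complex.exp (Complex.I * (r:ℂ)) * Complex.exp (-(Complex.I * (r:ℂ)))) := by
            rw [hsqrt, hexp, mul_one, mul_one]
        _ = I0 * (Real.sqrt r : ℂ) * Complex.exp (Complex.I * (r:ℂ))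
            * (((Real.sqrt r)⁻¹ : ℝ) : ℂ) * Complex.exp (-(Complex.I * (r:ℂ))) := by ring
  · -- small r
    refine ⟨0, ∫ θ in (0:ℝ)..π, oscF ν r θ, by simp, ?_, by rw [hint]; ring⟩
    have hπ : ‖∫ θ in (0:ℝ)..π, oscF ν r θ‖ ≤ 1 * |π - 0| := by
      apply intervalIntegral.norm_integral_le_of_norm_le_const
      exact fun x _ => le_of_eq (oscF_norm ν r x)
    have h4 : π ≤ 4 := Real.pi_le_four
    have hinv : 1 < r⁻¹ := by
      rw [lt_inv_comm₀ one_pos hr0]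
      simpa using hr1
    rw [sub_zero, abs_of_nonneg Real.pi_pos.le] at hπ
    nlinarith [Real.pi_pos]
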